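/- Let A be an ℓ×ℓ complex matrix such that every eigenvalue of A has strictly negative real part. Then τ ↦ exp(τ A) is Lebesgue-integrable on [0, ∞), A is invertible, and ∫_0^∞ exp(τ A) dτ = −A^{−1}. -/

import Mathlib

open MeasureTheory Matrix Filter Topology

namespace IntegralExpNegAux

/-- `τ^k e^{bτ} → 0` for `b < 0`. -/
lemma tendsto_pow_mul_exp (k : ℕ) {b : ℝ} (hb : b < 0) :
    Tendsto (fun τ : ℝ => τ ^ k * Real.exp (b * τ)) atTop (𝓝 0) := by
  have hb' : 0 < -b := by linarith
  have h1 : Tendsto (fun τ : ℝ => (-b * τ) ^ k * Real.exp (-(-b * τ))) atTop (𝓝 0) :=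
    (Real.tendsto_pow_mul_exp_neg_atTop_nhds_zero k).comp
      (tendsto_id.const_mul_atTop hb')
  have h2 := h1.const_mul (((-b) ^ k)⁻¹)
  rw [mul_zero] at h2
  refine h2.congr fun τ => ?_
  have hbk : (-b) ^ k ≠ 0 := pow_ne_zero _ (ne_of_gt hb')
  rw [mul_pow, neg_mul, neg_neg, mul_assoc, inv_mul_cancel_left₀ hbk]

lemma integrableOn_pow_mul_exp (k : ℕ) {b : ℝ} (hb : b < 0) :
    IntegrableOn (fun τ : ℝ => τ ^ k * Real.exp (b * τ)) (Set.Ici 0) := by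
  rw [integrableOn_Ici_iff_integrableOn_Ioi]
  refine integrable_of_isBigO_exp_neg (b := -b / 2) (by linarith)
    (Continuous.continuousOn (by fun_prop)) ?_
  have h0 : Tendsto (fun τ : ℝ => τ ^ k * Real.exp (b / 2 * τ)) atTop (𝓝 0) :=
    tendsto_pow_mul_exp k (by linarith)
  have h1 := (h0.isBigO_one ℝ).mul
    (Asymptotics.isBigO_refl (fun τ : ℝ => Real.exp (b / 2 * τ)) atTop)
  refine h1.congr (fun τ => ?_) (fun τ => ?_)
  · rw [mul_assoc, ← Real.exp_add]
    congr 2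
    ring
  · rw [one_mul]
    congr 1
    ring

/-- integrability of `exp(τμ) τ^k c` for `Re μ < 0`. -/
lemma aux_integrableOn (c : ℂ) (k : ℕ) {μ : ℂ} (hμ : μ.re < 0) :
    IntegrableOn (fun τ : ℝ => Complex.exp (τ * μ) * (τ : ℂ) ^ k * c) (Set.Ici 0) := by
  refine Integrable.mono' ((integrableOn_pow_mul_exp k hμ).mul_const ‖c‖)
    ((Continuous.aestronglyMeasurable (by fun_prop)).restrict) ?_
  filter_upwards [ae_restrict_mem measurableSet_Ici] with τ (hτ : (0:ℝ) ≤ τ)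
  have : ‖Complex.exp (↑τ * μ) * (τ:ℂ) ^ k * c‖
      = Real.exp (τ * μ.re) * τ ^ k * ‖c‖ := by
    rw [norm_mul, norm_mul, norm_pow,
      Complex.norm_exp, Complex.norm_real, Real.norm_eq_abs, abs_of_nonneg hτ, Complex.re_ofReal_mul]
  rw [this]
  have : Real.exp (τ * μ.re) = Real.exp (μ.re * τ) := by rw [mul_comm]
  rw [this]
  nlinarith [Real.exp_pos (μ.re * τ), pow_nonneg hτ k, norm_nonneg c,
    mul_nonneg (pow_nonneg hτ k) (norm_nonneg c)]

lemma aux_tendsto (c : ℂ) (k : ℕ) {μ : ℂ} (hμ : μ.re < 0) :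
    Tendsto (fun τ : ℝ => Complex.exp (τ * μ) * (τ : ℂ) ^ k * c) atTop (𝓝 0) := by
  have hg : Tendsto (fun τ : ℝ => τ ^ k * Real.exp (μ.re * τ) * ‖c‖) atTop (𝓝 0) := by
    simpa using (tendsto_pow_mul_exp k hμ).mul_const ‖c‖
  refine squeeze_zero_norm' ?_ hg
  filter_upwards [eventually_ge_atTop (0:ℝ)] with τ hτ
  rw [norm_mul, norm_mul, norm_pow,
    Complex.norm_exp, Complex.norm_real, Real.norm_eq_abs, abs_of_nonneg hτ, Complex.re_ofReal_mul]
  rw [mul_comm τ μ.re]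
  nlinarith [Real.exp_pos (μ.re * τ), pow_nonneg hτ k, norm_nonneg c]

end IntegralExpNegAux

namespace IntegralExpNegAux

open NormedSpace

variable {ℓ : ℕ}

/-- `M ↦ M *ᵥ v` as a continuous linear map. -/
noncomputable def mulVecCLM (v : Fin ℓ → ℂ) :
    Matrix (Fin ℓ) (Fin ℓ) ℂ →L[ℂ] (Fin ℓ → ℂ) where
  toFun M := M *ᵥ v
  map_add' M N := Matrix.add_mulVec M N v
  map_smul' c M := Matrix.smul_mulVec c M v
  cont := by
    apply continuous_pi
    intro i
    simp only [Matrix.mulVec, dotProduct]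
    exact continuous_finset_sum _ fun j _ =>
      ((continuous_id.matrix_elem i j).mul continuous_const)

lemma exp_smul_mulVec (A : Matrix (Fin ℓ) (Fin ℓ) ℂ) {μ : ℂ} {m : ℕ} {v : Fin ℓ → ℂ}
    (hv : ((A - μ • 1) ^ m) *ᵥ v = 0) (τ : ℝ) :
    exp ((τ : ℂ) • A) *ᵥ v =
      ∑ k ∈ Finset.range m, (Complex.exp (τ * μ) * (τ : ℂ) ^ k) •
        ((k.factorial : ℂ)⁻¹ • (((A - μ • 1) ^ k) *ᵥ v)) := by
  letI : SeminormedRing (Matrix (Fin ℓ) (Fin ℓ) ℂ) := Matrix.linftyOpSemiNormedRing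
  letI : NormedRing (Matrix (Fin ℓ) (Fin ℓ) ℂ) := Matrix.linftyOpNormedRing
  letI : NormedAlgebra ℂ (Matrix (Fin ℓ) (Fin ℓ) ℂ) := Matrix.linftyOpNormedAlgebra
  set N : Matrix (Fin ℓ) (Fin ℓ) ℂ := A - μ • 1 with hN
  have hsplit : (τ : ℂ) • A = ((τ : ℂ) * μ) • (1 : Matrix (Fin ℓ) (Fin ℓ) ℂ) + (τ : ℂ) • N := by
    rw [hN, smul_sub, smul_smul]
    abel
  have hcomm : Commute (((τ : ℂ) * μ) • (1 : Matrix (Fin ℓ) (Fin ℓ) ℂ)) ((τ : ℂ) • N) :=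
    ((Commute.one_left _).smul_left _).smul_right _
  rw [hsplit, Matrix.exp_add_of_commute _ _ hcomm]
  have h1 : exp (((τ : ℂ) * μ) • (1 : Matrix (Fin ℓ) (Fin ℓ) ℂ))
      = Complex.exp ((τ : ℂ) * μ) • (1 : Matrix (Fin ℓ) (Fin ℓ) ℂ) := by
    have h := algebraMap_exp_comm (𝕂 := ℂ) (𝔸 := Matrix (Fin ℓ) (Fin ℓ) ℂ) ((τ : ℂ) * μ)
    rw [Algebra.algebraMap_eq_smul_one, Algebra.algebraMap_eq_smul_one] at h
    rw [Complex.exp_eq_exp_ℂ]; exact h.symm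
  rw [h1, smul_mul_assoc, one_mul, Matrix.smul_mulVec]
  have hNsum : exp ((τ : ℂ) • N) *ᵥ v =
      ∑ k ∈ Finset.range m, ((τ : ℂ) ^ k) • ((k.factorial : ℂ)⁻¹ • ((N ^ k) *ᵥ v)) := by
    have hx : exp ((τ : ℂ) • N) = ∑' k : ℕ, (k.factorial : ℂ)⁻¹ • ((τ : ℂ) • N) ^ k :=
      congrFun (exp_eq_tsum (𝕂 := ℂ)) ((τ : ℂ) • N)
    have hmv : ∀ M : Matrix (Fin ℓ) (Fin ℓ) ℂ, M *ᵥ v = mulVecCLM v M := fun _ => rfl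
    have hs : Summable (fun k : ℕ => (k.factorial : ℂ)⁻¹ • ((τ : ℂ) • N) ^ k) := by
      exact expSeries_summable' (𝕂 := ℂ) ((τ : ℂ) • N)
    rw [hx, hmv, ContinuousLinearMap.map_tsum _ hs]
    rw [tsum_eq_sum (s := Finset.range m) ?_]
    · refine Finset.sum_congr rfl fun k _ => ?_
      show ((k.factorial : ℂ)⁻¹ • ((τ : ℂ) • N) ^ k) *ᵥ v = _
      rw [smul_pow, Matrix.smul_mulVec, Matrix.smul_mulVec, smul_comm]
    · intro k hk
      have hmk : m ≤ k := le_of_not_gt (by simpa using hk)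
      have hzero : (N ^ k) *ᵥ v = 0 := by
        rw [← Nat.sub_add_cancel hmk, pow_add, ← Matrix.mulVec_mulVec, hv, Matrix.mulVec_zero]
      show ((k.factorial : ℂ)⁻¹ • ((τ : ℂ) • N) ^ k) *ᵥ v = 0
      rw [smul_pow, Matrix.smul_mulVec, Matrix.smul_mulVec, hzero, smul_zero,
        smul_zero]
  rw [hNsum, Finset.smul_sum]
  exact Finset.sum_congr rfl fun k _ => by rw [smul_smul]

end IntegralExpNegAux

namespace IntegralExpNegAux

open NormedSpace


lemma entries_integrable_tendsto (A : Matrix (Fin ℓ) (Fin ℓ) ℂ)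
    (hA : ∀ lam : ℂ, lam ∈ spectrum ℂ A → lam.re < 0) (v : Fin ℓ → ℂ) :
    (∀ i, IntegrableOn (fun τ : ℝ => (exp ((τ : ℂ) • A) *ᵥ v) i) (Set.Ici 0)) ∧
    (∀ i, Tendsto (fun τ : ℝ => (exp ((τ : ℂ) • A) *ᵥ v) i) atTop (𝓝 0)) := by
  set P : (Fin ℓ → ℂ) → Prop := fun w =>
    (∀ i, IntegrableOn (fun τ : ℝ => (exp ((τ : ℂ) • A) *ᵥ w) i) (Set.Ici 0)) ∧
    (∀ i, Tendsto (fun τ : ℝ => (exp ((τ : ℂ) • A) *ᵥ w) i) atTop (𝓝 0)) with hPdef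
  set f : Module.End ℂ (Fin ℓ → ℂ) := Matrix.toLinAlgEquiv' A with hf
  have htop : v ∈ ⨆ μ : ℂ, f.maxGenEigenspace μ := by
    rw [Module.End.iSup_maxGenEigenspace_eq_top]; trivial
  have h0 : P 0 := by
    rw [hPdef]
    constructor
    · intro i
      simp only [Matrix.mulVec_zero, Pi.zero_apply]
      exact integrableOn_zero
    · intro i
      simp only [Matrix.mulVec_zero, Pi.zero_apply]
      exact tendsto_const_nhds
  have hadd : ∀ x y, P x → P y → P (x + y) := by
    rw [hPdef]
    rintro x y ⟨hx1, hx2⟩ ⟨hy1, hy2⟩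
    constructor
    · intro i
      simp only [Matrix.mulVec_add, Pi.add_apply]
      exact (hx1 i).add (hy1 i)
    · intro i
      simp only [Matrix.mulVec_add, Pi.add_apply]
      simpa using (hx2 i).add (hy2 i)
  have hmem : ∀ (μ : ℂ) (w : Fin ℓ → ℂ), w ∈ f.maxGenEigenspace μ → P w := by
    intro μ w hw
    obtain ⟨k, hk⟩ := (Module.End.mem_maxGenEigenspace f μ w).mp hw
    have hfk : (f - μ • 1) ^ k = Matrix.toLinAlgEquiv' ((A - μ • 1) ^ k) := by
      rw [map_pow, map_sub, _root_.map_smul, _root_.map_one, hf]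
    have hk' : ((A - μ • 1) ^ k) *ᵥ w = 0 := by
      rw [hfk] at hk
      rwa [Matrix.toLinAlgEquiv'_apply] at hk
    by_cases hw0 : w = 0
    · subst hw0; exact h0
    · have hμ : μ.re < 0 := by
        apply hA
        have hgen : f.HasGenEigenvalue μ k := by
          rw [Module.End.hasGenEigenvalue_iff, Submodule.ne_bot_iff]
          refine ⟨w, ?_, hw0⟩
          rw [Module.End.genEigenspace_nat, LinearMap.mem_ker, hfk,
            Matrix.toLinAlgEquiv'_apply]
          exact hk'
        have hsp := (Module.End.hasEigenvalue_of_hasGenEigenvalue hgen).mem_spectrum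
        rwa [hf, AlgEquiv.spectrum_eq] at hsp
      have hrw : ∀ i, (fun τ : ℝ => (exp ((τ : ℂ) • A) *ᵥ w) i)
          = fun τ : ℝ => ∑ n ∈ Finset.range k,
            Complex.exp (τ * μ) * (τ : ℂ) ^ n *
              (((n.factorial : ℂ)⁻¹ • (((A - μ • 1) ^ n) *ᵥ w)) i) := by
        intro i
        funext τ
        rw [exp_smul_mulVec A hk' τ, Finset.sum_apply]
        exact Finset.sum_congr rfl fun n _ => by
          rw [Pi.smul_apply, smul_eq_mul]
      rw [hPdef]
      constructor
      · intro i
        rw [hrw i]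
        exact integrable_finset_sum _ fun n _ => aux_integrableOn _ n hμ
      · intro i
        rw [hrw i]
        have := tendsto_finset_sum (Finset.range k)
          (fun n (_ : n ∈ Finset.range k) => aux_tendsto
            (((n.factorial : ℂ)⁻¹ • (((A - μ • 1) ^ n) *ᵥ w)) i) n hμ)
        simpa using this
  exact Submodule.iSup_induction (motive := P) (fun μ : ℂ => f.maxGenEigenspace μ) htop hmem h0 hadd

end IntegralExpNegAux

open MeasureTheory Matrix

set_option maxHeartbeats 1000000 in
/-- If every eigenvalue of the complex matrix `A` has strictly negative real part, then
`τ ↦ exp(τ A)` is Lebesgue-integrable on `[0, ∞)` (entrywise), `A` is invertible, and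
`∫_0^∞ exp(τ A) dτ = -A⁻¹` (entrywise). -/
theorem integral_exp_of_spectrum_neg_re
    {ℓ : ℕ} (A : Matrix (Fin ℓ) (Fin ℓ) ℂ)
    (hA : ∀ lam : ℂ, lam ∈ spectrum ℂ A → lam.re < 0) :
    (∀ i j : Fin ℓ,
      IntegrableOn (fun τ : ℝ => NormedSpace.exp ((τ : ℂ) • A) i j) (Set.Ici 0)) ∧
    IsUnit A ∧
    (∀ i j : Fin ℓ,
      (∫ τ : ℝ in Set.Ici (0 : ℝ), NormedSpace.exp ((τ : ℂ) • A) i j) = (-A⁻¹) i j) := by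
  classical
  have hunit : IsUnit A := by
    have h0 : (0 : ℂ) ∉ spectrum ℂ A := fun h => absurd (hA 0 h) (by simp)
    rw [spectrum.notMem_iff, map_zero, zero_sub] at h0
    simpa using h0.neg
  have hentryeq : ∀ (i j : Fin ℓ), (fun τ : ℝ => NormedSpace.exp ((τ : ℂ) • A) i j)
      = fun τ : ℝ => (NormedSpace.exp ((τ : ℂ) • A) *ᵥ Pi.single j 1) i := by
    intro i j
    funext τ
    simp [Matrix.mulVec_single]
  have hint : ∀ i j : Fin ℓ,
      IntegrableOn (fun τ : ℝ => NormedSpace.exp ((τ : ℂ) • A) i j) (Set.Ici 0) := by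
    intro i j
    rw [hentryeq i j]
    exact (IntegralExpNegAux.entries_integrable_tendsto A hA (Pi.single j 1)).1 i
  have htend : ∀ i j : Fin ℓ,
      Filter.Tendsto (fun τ : ℝ => NormedSpace.exp ((τ : ℂ) • A) i j)
        Filter.atTop (nhds 0) := by
    intro i j
    rw [hentryeq i j]
    exact (IntegralExpNegAux.entries_integrable_tendsto A hA (Pi.single j 1)).2 i
  refine ⟨hint, hunit, ?_⟩
  intro i j
  have hdet : IsUnit A.det := (Matrix.isUnit_iff_isUnit_det A).mp hunit
  have hAinv : A * A⁻¹ = 1 := Matrix.mul_nonsing_inv A hdet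
  letI : SeminormedRing (Matrix (Fin ℓ) (Fin ℓ) ℂ) := Matrix.linftyOpSemiNormedRing
  letI : NormedRing (Matrix (Fin ℓ) (Fin ℓ) ℂ) := Matrix.linftyOpNormedRing
  letI : NormedAlgebra ℂ (Matrix (Fin ℓ) (Fin ℓ) ℂ) := Matrix.linftyOpNormedAlgebra
  let L : Matrix (Fin ℓ) (Fin ℓ) ℂ →L[ℂ] ℂ :=
    { toFun := fun M => (M * A⁻¹) i j
      map_add' := fun M N => by simp [Matrix.add_mul]
      map_smul' := fun c M => by simp [Matrix.smul_mul]
      cont := by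
        simp only [Matrix.mul_apply]
        exact continuous_finset_sum _ fun l _ =>
          ((continuous_id.matrix_elem i l).mul continuous_const) }
  have hLdef : ∀ M : Matrix (Fin ℓ) (Fin ℓ) ℂ, L M = (M * A⁻¹) i j := fun _ => rfl
  have hderiv : ∀ τ : ℝ, HasDerivAt (fun t : ℝ => L (NormedSpace.exp ((t : ℂ) • A)))
      (NormedSpace.exp ((τ : ℂ) • A) i j) τ := by
    intro τ
    have h1 : HasDerivAt (fun z : ℂ => NormedSpace.exp (z • A))
        (NormedSpace.exp ((τ : ℂ) • A) * A) (τ : ℂ) :=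
      hasDerivAt_exp_smul_const A (τ : ℂ)
    have h2 : HasDerivAt (fun z : ℂ => L (NormedSpace.exp (z • A)))
        (L (NormedSpace.exp ((τ : ℂ) • A) * A)) (τ : ℂ) :=
      L.hasFDerivAt.comp_hasDerivAt _ h1
    have h3 := h2.comp_ofReal
    have h4 : L (NormedSpace.exp ((τ : ℂ) • A) * A) = NormedSpace.exp ((τ : ℂ) • A) i j := by
      rw [hLdef, Matrix.mul_assoc, hAinv, Matrix.mul_one]
    rwa [h4] at h3
  have hcont : Continuous (fun τ : ℝ => NormedSpace.exp ((τ : ℂ) • A) i j) := by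
    letI : NormedAlgebra ℚ (Matrix (Fin ℓ) (Fin ℓ) ℂ) := NormedAlgebra.restrictScalars ℚ ℂ _
    have hexp : Continuous (NormedSpace.exp :
        Matrix (Fin ℓ) (Fin ℓ) ℂ → Matrix (Fin ℓ) (Fin ℓ) ℂ) := NormedSpace.exp_continuous
    have h1 : Continuous fun τ : ℝ => (τ : ℂ) • A :=
      Complex.continuous_ofReal.smul continuous_const
    exact (hexp.comp h1).matrix_elem i j
  have hFTC : ∀ T : ℝ, ∫ τ in (0:ℝ)..T, NormedSpace.exp ((τ : ℂ) • A) i j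
      = L (NormedSpace.exp ((T : ℂ) • A)) - L (NormedSpace.exp (((0:ℝ) : ℂ) • A)) :=
    fun T => intervalIntegral.integral_eq_sub_of_hasDerivAt (fun t _ => hderiv t)
      (hcont.intervalIntegrable 0 T)
  have hlim1 : Filter.Tendsto (fun T : ℝ => ∫ τ in (0:ℝ)..T, NormedSpace.exp ((τ : ℂ) • A) i j)
      Filter.atTop (nhds (∫ τ : ℝ in Set.Ioi (0:ℝ), NormedSpace.exp ((τ : ℂ) • A) i j)) :=
    intervalIntegral_tendsto_integral_Ioi 0 ((hint i j).mono_set Set.Ioi_subset_Ici_self)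
      Filter.tendsto_id
  have hlim2 : Filter.Tendsto (fun T : ℝ => L (NormedSpace.exp ((T : ℂ) • A))
        - L (NormedSpace.exp (((0:ℝ) : ℂ) • A)))
      Filter.atTop (nhds (0 - L (NormedSpace.exp (((0:ℝ) : ℂ) • A)))) := by
    refine Filter.Tendsto.sub_const ?_ _
    have hre : (fun T : ℝ => L (NormedSpace.exp ((T : ℂ) • A)))
        = fun T : ℝ => ∑ l, NormedSpace.exp ((T : ℂ) • A) i l * A⁻¹ l j := by
      funext T
      rw [hLdef, Matrix.mul_apply]
    rw [hre]
    have := tendsto_finset_sum Finset.univ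
      (fun l (_ : l ∈ Finset.univ) => (htend i l).mul_const (A⁻¹ l j))
    simpa using this
  have h0val : L (NormedSpace.exp (((0:ℝ) : ℂ) • A)) = A⁻¹ i j := by
    rw [Complex.ofReal_zero, zero_smul, NormedSpace.exp_zero, hLdef, Matrix.one_mul]
  have hmain : (∫ τ : ℝ in Set.Ioi (0:ℝ), NormedSpace.exp ((τ : ℂ) • A) i j)
      = 0 - L (NormedSpace.exp (((0:ℝ) : ℂ) • A)) := by
    refine tendsto_nhds_unique ?_ hlim2
    have heq : (fun T : ℝ => ∫ τ in (0:ℝ)..T, NormedSpace.exp ((τ : ℂ) • A) i j)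
        = fun T : ℝ => L (NormedSpace.exp ((T : ℂ) • A))
            - L (NormedSpace.exp (((0:ℝ) : ℂ) • A)) := funext hFTC
    rw [← heq]
    exact hlim1
  rw [MeasureTheory.integral_Ici_eq_integral_Ioi, hmain, h0val, zero_sub, Matrix.neg_apply]
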